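/- arXiv:2308.01767 — 3 statements merged into one kernel-verified Lean document; each statement's English description precedes it below -/
import Mathlib

section
/- Let n ≥ 1 and let S be a finite set of arcs of M̄_n which is connected, has complete orbit and is minimal. Then no element of S is a short arc. (Equivalently: an indecomposable object of the Paquette–Yıldırım category C̄_n corresponding to a short arc cannot be a direct summand of a minimal strong generator of C̄_n.) -/
/-! Combinatorial model of the Paquette–Yıldırım completed cluster category `C̄ₙ`.

The set of marked points `M̄ₙ` consists of the marked points `(k, i)` (the `k`-th marked
point of the `i`-th segment, for `i : Fin n`) together with the accumulation points
(indexed by `Fin n`; `Sum.inr i` is the accumulation point `a_{i+1}` of the paper). -/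

/-- The marked points of `M̄ₙ`: `Sum.inl (k, i)` is a marked point of a segment,
`Sum.inr i` is an accumulation point. -/
abbrev MbarPt (n : ℕ) := (ℤ × Fin n) ⊕ Fin n

/-- The injection of `M̄ₙ` into the circle `ℝ/nℤ`, given by representatives in `[0, n)`:
the accumulation point `i` goes to `i`, and the marked point `(k, i)` goes to
`i + 1/2 + k/(2(|k|+1))`. -/
noncomputable def toCircle {n : ℕ} : MbarPt n → ℝ
  | Sum.inl (k, i) => (i : ℝ) + 1 / 2 + (k : ℝ) / (2 * (|(k : ℝ)| + 1))
  | Sum.inr i => (i : ℝ)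

/-- `y` lies strictly between `x` and `z` in the cyclic order on `M̄ₙ` (going
counterclockwise from `x` to `z`), expressed via the representatives in `[0, n)`. -/
def CycSBtw {n : ℕ} (x y z : MbarPt n) : Prop :=
  (toCircle x < toCircle y ∧ toCircle y < toCircle z) ∨
  (toCircle y < toCircle z ∧ toCircle z < toCircle x) ∨
  (toCircle z < toCircle x ∧ toCircle x < toCircle y)

/-- An arc of `M̄ₙ` is an unordered pair of distinct points of `M̄ₙ` which is not a pair
of consecutive marked points `{(k,i), (k+1,i)}` of a segment. -/
def IsArc {n : ℕ} (p : Sym2 (MbarPt n)) : Prop :=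
  ¬ p.IsDiag ∧ ∀ (k : ℤ) (i : Fin n),
    p ≠ s(Sum.inl (k, i), Sum.inl (k + 1, i))

/-- The `m`-fold clockwise rotation of a point: marked points `(k, i)` move to `(k - m, i)`,
accumulation points are fixed. -/
def rotPt {n : ℕ} (m : ℤ) : MbarPt n → MbarPt n
  | Sum.inl (k, i) => Sum.inl (k - m, i)
  | Sum.inr i => Sum.inr i

/-- The `m`-fold clockwise rotation `ℓ⟦m⟧` of an arc. -/
def rotArc {n : ℕ} (m : ℤ) (p : Sym2 (MbarPt n)) : Sym2 (MbarPt n) :=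
  Sym2.map (rotPt m) p

/-- `p` and `q` are rotations of one another. -/
def SameRot {n : ℕ} (p q : Sym2 (MbarPt n)) : Prop :=
  ∃ m : ℤ, p = rotArc m q

/-- The rotation closure `R(S)` of a set of arcs `S`. -/
def RClos {n : ℕ} (S : Set (Sym2 (MbarPt n))) : Set (Sym2 (MbarPt n)) :=
  {q | ∃ p ∈ S, ∃ m : ℤ, q = rotArc m p}

/-- Two arcs cross if their endpoints alternate in the cyclic order: exactly one
endpoint of one lies strictly between the two endpoints of the other. -/
def Crosses {n : ℕ} (p q : Sym2 (MbarPt n)) : Prop :=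
  ∃ x y z w : MbarPt n, p = s(x, y) ∧ q = s(z, w) ∧ CycSBtw x z y ∧ CycSBtw y w x

/-- Adjacency `ℓ ~ ℓ'` of arcs: they cross, or they are distinct and share an endpoint
which is an accumulation point. -/
def Adj {n : ℕ} (p q : Sym2 (MbarPt n)) : Prop :=
  Crosses p q ∨ (p ≠ q ∧ ∃ i : Fin n, (Sum.inr i : MbarPt n) ∈ p ∧ (Sum.inr i : MbarPt n) ∈ q)

/-- Paths of length `m` in the graph with vertex set `T` and edge relation `Adj`. -/
def AdjChain {n : ℕ} (T : Set (Sym2 (MbarPt n))) : ℕ → Sym2 (MbarPt n) → Sym2 (MbarPt n) → Prop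
  | 0, p, q => p = q
  | m + 1, p, q => ∃ r ∈ T, Adj p r ∧ AdjChain T m r q

/-- `S` is connected: the graph with vertex set `R(S)` and edge relation `~` is connected. -/
def ConnectedArcs {n : ℕ} (S : Set (Sym2 (MbarPt n))) : Prop :=
  ∀ p ∈ RClos S, ∀ q ∈ RClos S, ∃ m : ℕ, AdjChain (RClos S) m p q

/-- `S` has complete orbit: every point of `M̄ₙ` is an endpoint of some arc of `R(S)`. -/
def CompleteOrbit {n : ℕ} (S : Set (Sym2 (MbarPt n))) : Prop :=
  ∀ x : MbarPt n, ∃ p ∈ RClos S, x ∈ p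

/-- `S` is minimal: removing any arc of `S` destroys connectedness or completeness of orbit. -/
def MinimalArcSet {n : ℕ} (S : Set (Sym2 (MbarPt n))) : Prop :=
  ∀ ℓ ∈ S, ¬ (ConnectedArcs (S \ {ℓ}) ∧ CompleteOrbit (S \ {ℓ}))

/-- The homological length of (a connected) `S` is at most `d`: any two vertices of
`R(S)` are joined by a `~`-path of length at most `d`. -/
def HLenLE {n : ℕ} (S : Set (Sym2 (MbarPt n))) (d : ℕ) : Prop :=
  ∀ p ∈ RClos S, ∀ q ∈ RClos S, ∃ m ≤ d, AdjChain (RClos S) m p q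

/-- The homological length of (a connected) `S` is exactly `d`: every pair of vertices of
`R(S)` is joined by a path of length `≤ d`, and some pair admits no path of length `< d`. -/
def HLenEq {n : ℕ} (S : Set (Sym2 (MbarPt n))) (d : ℕ) : Prop :=
  HLenLE S d ∧ ∃ p ∈ RClos S, ∃ q ∈ RClos S, ∀ m < d, ¬ AdjChain (RClos S) m p q

/-- An arc is a short arc if both of its endpoints are marked points of the same segment. -/
def IsShortArc {n : ℕ} (p : Sym2 (MbarPt n)) : Prop :=
  ∃ (k k' : ℤ) (i : Fin n), p = s(Sum.inl (k, i), Sum.inl (k', i))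

section ShortArcAux

open Sum

variable {n : ℕ}

private lemma frac_lt {k k' : ℤ} (h : k < k') :
    (k:ℝ)/(|(k:ℝ)|+1) < (k':ℝ)/(|(k':ℝ)|+1) := by
  have hk : (0:ℝ) < |(k:ℝ)|+1 := by positivity
  have hk' : (0:ℝ) < |(k':ℝ)|+1 := by positivity
  rw [div_lt_div_iff₀ hk hk']
  have h' : (k:ℝ) < (k':ℝ) := by exact_mod_cast h
  rcases le_or_gt 0 (k:ℝ) with h1 | h1 <;> rcases le_or_gt 0 (k':ℝ) with h2 | h2
  · rw [abs_of_nonneg h1, abs_of_nonneg h2]; nlinarith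
  · linarith
  · rw [abs_of_neg h1, abs_of_nonneg h2]; nlinarith
  · rw [abs_of_neg h1, abs_of_neg h2]; nlinarith

private lemma toCircle_seg_gt (k : ℤ) (i : Fin n) : (i:ℝ) < toCircle (inl (k,i)) := by
  have hD : (0:ℝ) < 2*(|(k:ℝ)|+1) := by positivity
  have h2 : -(|(k:ℝ)|+1) < (k:ℝ) := by
    rcases le_or_gt 0 (k:ℝ) with h|h
    · have : (0:ℝ) ≤ |(k:ℝ)| := abs_nonneg _
      linarith
    · rw [abs_of_neg h]; linarith
  have : -(1/2:ℝ) < (k:ℝ)/(2*(|(k:ℝ)|+1)) := by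
    rw [lt_div_iff₀ hD]; nlinarith
  show (i:ℝ) < (i:ℝ) + 1/2 + (k:ℝ)/(2*(|(k:ℝ)|+1))
  linarith

private lemma toCircle_seg_lt (k : ℤ) (i : Fin n) : toCircle (inl (k,i)) < (i:ℝ) + 1 := by
  have hD : (0:ℝ) < 2*(|(k:ℝ)|+1) := by positivity
  have h2 : (k:ℝ) ≤ |(k:ℝ)| := le_abs_self _
  have : (k:ℝ)/(2*(|(k:ℝ)|+1)) < 1/2 := by
    rw [div_lt_iff₀ hD]; nlinarith
  show (i:ℝ) + 1/2 + (k:ℝ)/(2*(|(k:ℝ)|+1)) < (i:ℝ) + 1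
  linarith

private lemma toCircle_inr (j : Fin n) : toCircle (inr j : MbarPt n) = j := rfl

private lemma seg_mono {k k' : ℤ} {i : Fin n} (h : k < k') :
    toCircle (inl (k,i) : MbarPt n) < toCircle (inl (k',i)) := by
  have e1 : (k:ℝ)/(2*(|(k:ℝ)|+1)) = ((k:ℝ)/(|(k:ℝ)|+1))/2 := by
    rw [div_div]; ring_nf
  have e2 : (k':ℝ)/(2*(|(k':ℝ)|+1)) = ((k':ℝ)/(|(k':ℝ)|+1))/2 := by
    rw [div_div]; ring_nf
  have := frac_lt h
  show (i:ℝ) + 1/2 + (k:ℝ)/(2*(|(k:ℝ)|+1)) < (i:ℝ) + 1/2 + (k':ℝ)/(2*(|(k':ℝ)|+1))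
  rw [e1, e2]; linarith

private lemma seg_lt_iff {k k' : ℤ} {i : Fin n} :
    toCircle (inl (k,i) : MbarPt n) < toCircle (inl (k',i)) ↔ k < k' := by
  constructor
  · intro h; by_contra h'; push_neg at h'
    rcases eq_or_lt_of_le h' with h''|h''
    · rw [h''] at h; exact lt_irrefl _ h
    · exact absurd h (not_lt.mpr (le_of_lt (seg_mono h'')))
  · exact seg_mono

private lemma seg_lt_seg {k k' : ℤ} {i j : Fin n} (hij : (i:ℕ) < (j:ℕ)) :
    toCircle (inl (k,i) : MbarPt n) < toCircle (inl (k',j)) := by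
  have h1 := toCircle_seg_lt (n := n) k i
  have h2 := toCircle_seg_gt (n := n) k' j
  have : ((i:ℕ):ℝ) + 1 ≤ ((j:ℕ):ℝ) := by exact_mod_cast hij
  linarith

private lemma seg_lt_accum {k : ℤ} {i j : Fin n} (hij : (i:ℕ) < (j:ℕ)) :
    toCircle (inl (k,i) : MbarPt n) < toCircle (inr j) := by
  have h1 := toCircle_seg_lt (n := n) k i
  have : ((i:ℕ):ℝ) + 1 ≤ ((j:ℕ):ℝ) := by exact_mod_cast hij
  rw [toCircle_inr]; linarith

private lemma accum_lt_seg {k : ℤ} {i j : Fin n} (hij : (j:ℕ) ≤ (i:ℕ)) :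
    toCircle (inr j : MbarPt n) < toCircle (inl (k,i)) := by
  have h1 := toCircle_seg_gt (n := n) k i
  have : ((j:ℕ):ℝ) ≤ ((i:ℕ):ℝ) := by exact_mod_cast hij
  rw [toCircle_inr]; linarith

private lemma seg_lt_seg_iff {k k' : ℤ} {i j : Fin n} (hij : i ≠ j) :
    (toCircle (inl (k,i) : MbarPt n) < toCircle (inl (k',j))) ↔ (i:ℕ) < (j:ℕ) := by
  rcases Nat.lt_trichotomy (i:ℕ) (j:ℕ) with h|h|h
  · exact iff_of_true (seg_lt_seg h) h
  · exact absurd (Fin.ext h) hij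
  · exact iff_of_false (not_lt.mpr (le_of_lt (seg_lt_seg h))) (by omega)

private lemma seg_lt_accum_iff {k : ℤ} {i j : Fin n} :
    (toCircle (inl (k,i) : MbarPt n) < toCircle (inr j)) ↔ (i:ℕ) < (j:ℕ) := by
  constructor
  · intro h; by_contra h'; push_neg at h'
    exact absurd h (not_lt.mpr (le_of_lt (accum_lt_seg h')))
  · intro h; exact seg_lt_accum h

private lemma accum_lt_seg_iff {k : ℤ} {i j : Fin n} :
    (toCircle (inr j : MbarPt n) < toCircle (inl (k,i))) ↔ (j:ℕ) ≤ (i:ℕ) := by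
  constructor
  · intro h; by_contra h'; push_neg at h'
    exact absurd h (not_lt.mpr (le_of_lt (seg_lt_accum h')))
  · intro h; exact accum_lt_seg h

private lemma rotPt_lt_iff (m : ℤ) (x y : MbarPt n) :
    toCircle (rotPt m x) < toCircle (rotPt m y) ↔ toCircle x < toCircle y := by
  rcases x with ⟨k,i⟩ | i <;> rcases y with ⟨k',j⟩ | j
  · by_cases hij : i = j
    · subst hij
      show toCircle (inl (k-m,i) : MbarPt n) < toCircle (inl (k'-m,i)) ↔ _
      rw [seg_lt_iff, seg_lt_iff]; omega
    · show toCircle (inl (k-m,i) : MbarPt n) < toCircle (inl (k'-m,j)) ↔ _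
      rw [seg_lt_seg_iff hij, seg_lt_seg_iff hij]
  · show toCircle (inl (k-m,i) : MbarPt n) < toCircle (inr j) ↔ _
    rw [seg_lt_accum_iff, seg_lt_accum_iff]
  · show toCircle (inr i : MbarPt n) < toCircle (inl (k'-m,j)) ↔ _
    rw [accum_lt_seg_iff, accum_lt_seg_iff]
  · exact Iff.rfl

end ShortArcAux
section ShortArcAux2

open Sum

variable {n : ℕ}

private lemma rotPt_rotPt (m m' : ℤ) (x : MbarPt n) :
    rotPt m (rotPt m' x) = rotPt (m' + m) x := by
  rcases x with ⟨k,i⟩ | i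
  · show (inl (k - m' - m, i) : MbarPt n) = inl (k - (m' + m), i)
    rw [sub_sub]
  · rfl

private lemma rotPt_zero (x : MbarPt n) : rotPt 0 x = x := by
  rcases x with ⟨k,i⟩ | i
  · show (inl (k - 0, i) : MbarPt n) = inl (k, i); rw [sub_zero]
  · rfl

private lemma rotArc_mk (m : ℤ) (x y : MbarPt n) :
    rotArc m s(x, y) = s(rotPt m x, rotPt m y) := rfl

private lemma rotArc_rotArc (m m' : ℤ) (p : Sym2 (MbarPt n)) :
    rotArc m (rotArc m' p) = rotArc (m' + m) p := by
  unfold rotArc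
  rw [Sym2.map_map]
  congr 1
  funext x
  exact rotPt_rotPt m m' x

private lemma rotArc_zero (p : Sym2 (MbarPt n)) : rotArc 0 p = p := by
  unfold rotArc
  have : rotPt (n := n) 0 = id := funext rotPt_zero
  rw [this, Sym2.map_id]; rfl

private lemma rotArc_cancel (m : ℤ) (p : Sym2 (MbarPt n)) :
    rotArc (-m) (rotArc m p) = p := by
  rw [rotArc_rotArc, add_neg_cancel, rotArc_zero]

private lemma cycSBtw_rot (m : ℤ) (x y z : MbarPt n) :
    CycSBtw (rotPt m x) (rotPt m y) (rotPt m z) ↔ CycSBtw x y z := by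
  unfold CycSBtw
  simp only [rotPt_lt_iff]

private lemma crosses_rot (m : ℤ) {p q : Sym2 (MbarPt n)} (h : Crosses p q) :
    Crosses (rotArc m p) (rotArc m q) := by
  obtain ⟨x,y,z,w,hp,hq,h1,h2⟩ := h
  exact ⟨rotPt m x, rotPt m y, rotPt m z, rotPt m w,
    by rw [hp, rotArc_mk], by rw [hq, rotArc_mk],
    (cycSBtw_rot m x z y).mpr h1, (cycSBtw_rot m y w x).mpr h2⟩

private lemma crosses_shift {p q : Sym2 (MbarPt n)} {t : ℤ}
    (h : Crosses p (rotArc t q)) : Crosses (rotArc (-t) p) q := by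
  have := crosses_rot (-t) h
  rwa [rotArc_cancel] at this

private lemma inr_mem_rot {j : Fin n} {p : Sym2 (MbarPt n)} (m : ℤ) :
    (inr j : MbarPt n) ∈ rotArc m p ↔ (inr j : MbarPt n) ∈ p := by
  unfold rotArc
  rw [Sym2.mem_map]
  constructor
  · rintro ⟨y, hy, hyy⟩
    rcases y with ⟨k,i⟩ | i
    · exact absurd hyy (by simp [rotPt])
    · have : i = j := by simpa [rotPt] using hyy
      subst this; exact hy
  · intro h; exact ⟨inr j, h, rfl⟩

private lemma adj_rot (m : ℤ) {p q : Sym2 (MbarPt n)} (h : Adj p q) :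
    Adj (rotArc m p) (rotArc m q) := by
  rcases h with h | ⟨hne, i, h1, h2⟩
  · exact Or.inl (crosses_rot m h)
  · refine Or.inr ⟨?_, i, (inr_mem_rot m).mpr h1, (inr_mem_rot m).mpr h2⟩
    intro he
    apply hne
    have := congrArg (rotArc (-m)) he
    rwa [rotArc_cancel, rotArc_cancel] at this

private lemma rotPt_inj {m : ℤ} {x y : MbarPt n} (h : rotPt m x = rotPt m y) : x = y := by
  have := congrArg (rotPt (-m)) h
  rwa [rotPt_rotPt, rotPt_rotPt, add_neg_cancel, rotPt_zero, rotPt_zero] at this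

private lemma isArc_rot {p : Sym2 (MbarPt n)} (m : ℤ) (h : IsArc p) : IsArc (rotArc m p) := by
  constructor
  · intro hd
    apply h.1
    induction p using Sym2.ind with
    | _ a b =>
      rw [rotArc_mk] at hd
      rw [Sym2.mk_isDiag_iff] at hd ⊢
      exact rotPt_inj hd
  · intro k i he
    apply h.2 (k + m) i
    have := congrArg (rotArc (-m)) he
    rw [rotArc_cancel, rotArc_mk] at this
    have e1 : (k : ℤ) - -m = k + m := by ring
    have e2 : (k + 1 : ℤ) - -m = k + m + 1 := by ring
    rw [this]
    show s(inl (k - -m, i), inl (k + 1 - -m, i)) = s(inl (k + m, i), inl (k + m + 1, i))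
    rw [e1, e2]

end ShortArcAux2
section ShortArcAux3

open Sum

variable {n : ℕ}

/-- `p` has an endpoint on segment `i`. -/
private def Touches (i : Fin n) (p : Sym2 (MbarPt n)) : Prop :=
  ∃ c : ℤ, (inl (c, i) : MbarPt n) ∈ p

private lemma touches_rot {i : Fin n} {p : Sym2 (MbarPt n)} (m : ℤ) (h : Touches i p) :
    Touches i (rotArc m p) := by
  obtain ⟨c, hc⟩ := h
  refine ⟨c - m, ?_⟩
  have : rotPt m (inl (c, i) : MbarPt n) = inl (c - m, i) := rfl
  rw [← this]
  exact Sym2.mem_map.mpr ⟨_, hc, rfl⟩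

private lemma touches_of_rot {i : Fin n} {p : Sym2 (MbarPt n)} {m : ℤ}
    (h : Touches i (rotArc m p)) : Touches i p := by
  have := touches_rot (-m) h
  rwa [rotArc_cancel] at this

private lemma cross_of_lin {p q : Sym2 (MbarPt n)} (x y z w : MbarPt n)
    (hp : p = s(x,y)) (hq : q = s(z,w))
    (h1 : toCircle x < toCircle z) (h2 : toCircle z < toCircle y)
    (h3 : toCircle w < toCircle x ∨ toCircle y < toCircle w) : Crosses p q := by
  refine ⟨x,y,z,w,hp,hq, Or.inl ⟨h1,h2⟩, ?_⟩
  rcases h3 with h3|h3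
  · exact Or.inr (Or.inl ⟨h3, lt_trans h1 h2⟩)
  · exact Or.inr (Or.inr ⟨lt_trans h1 h2, h3⟩)

private lemma crosses_symm {p q : Sym2 (MbarPt n)} (h : Crosses p q) : Crosses q p := by
  obtain ⟨x,y,z,w,hp,hq,h1,h2⟩ := h
  refine ⟨z,w,y,x, hq, by rw [hp]; exact Sym2.eq_swap, ?_, ?_⟩ <;>
  · unfold CycSBtw at h1 h2 ⊢
    rcases h1 with ⟨a1,a2⟩|⟨a1,a2⟩|⟨a1,a2⟩ <;> rcases h2 with ⟨b1,b2⟩|⟨b1,b2⟩|⟨b1,b2⟩ <;>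
      first
        | exact Or.inl ⟨by linarith, by linarith⟩
        | exact Or.inr (Or.inl ⟨by linarith, by linarith⟩)
        | exact Or.inr (Or.inr ⟨by linarith, by linarith⟩)

private lemma adj_symm {p q : Sym2 (MbarPt n)} (h : Adj p q) : Adj q p := by
  rcases h with h | ⟨hne, i, h1, h2⟩
  · exact Or.inl (crosses_symm h)
  · exact Or.inr ⟨hne.symm, i, h2, h1⟩

private lemma cross_of_alt {p q : Sym2 (MbarPt n)} (x y z w : MbarPt n)
    (hp : p = s(x,y)) (hq : q = s(z,w))
    (h1 : min (toCircle x) (toCircle y) < toCircle z)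
    (h2 : toCircle z < max (toCircle x) (toCircle y))
    (h3 : toCircle w < min (toCircle x) (toCircle y) ∨
          max (toCircle x) (toCircle y) < toCircle w) :
    Crosses p q := by
  rcases le_total (toCircle x) (toCircle y) with h|h
  · rw [min_eq_left h] at h1 h3; rw [max_eq_right h] at h2 h3
    exact cross_of_lin x y z w hp hq h1 h2 h3
  · rw [min_eq_right h] at h1 h3; rw [max_eq_left h] at h2 h3
    exact cross_of_lin y x z w (by rw [hp]; exact Sym2.eq_swap) hq h1 h2 h3

private lemma cross_of_alt' {p q : Sym2 (MbarPt n)} (x y z w : MbarPt n)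
    (hp : p = s(x,y)) (hq : q = s(z,w))
    (h1 : min (toCircle z) (toCircle w) < toCircle x)
    (h2 : toCircle x < max (toCircle z) (toCircle w))
    (h3 : toCircle y < min (toCircle z) (toCircle w) ∨
          max (toCircle z) (toCircle w) < toCircle y) :
    Crosses p q :=
  crosses_symm (cross_of_alt z w x y hq hp h1 h2 h3)

/-- alternation of the pair `{s,e}` against the pair `{c,d}`. -/
private def AltPt (s e c d : ℝ) : Prop :=
  ((min s e < c ∧ c < max s e) ∧ (d < min s e ∨ max s e < d)) ∨
  ((min s e < d ∧ d < max s e) ∧ (c < min s e ∨ max s e < c))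

private lemma crosses_of_altpt {p q : Sym2 (MbarPt n)} {X Y Z W : MbarPt n}
    (hp : p = s(X,Y)) (hq : q = s(Z,W))
    (h : AltPt (toCircle X) (toCircle Y) (toCircle Z) (toCircle W)) : Crosses p q := by
  rcases h with ⟨⟨h1,h2⟩,h3⟩|⟨⟨h1,h2⟩,h3⟩
  · exact cross_of_alt X Y Z W hp hq h1 h2 h3
  · exact cross_of_alt X Y W Z hp (by rw [hq]; exact Sym2.eq_swap) h1 h2 h3

private lemma eq_seg_of_between {x : MbarPt n} {i : Fin n}
    (h1 : (i:ℝ) < toCircle x) (h2 : toCircle x < (i:ℝ)+1) : ∃ c, x = inl (c, i) := by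
  rcases x with ⟨k,j⟩ | j
  · refine ⟨k, ?_⟩
    have hj1 := toCircle_seg_gt (n := n) k j
    have hj2 := toCircle_seg_lt (n := n) k j
    have hij : (i:ℕ) = (j:ℕ) := by
      have a1 : ((j:ℕ):ℝ) < (i:ℕ)+1 := by linarith
      have a2 : ((i:ℕ):ℝ) < (j:ℕ)+1 := by linarith
      have b1 : (j:ℕ) < (i:ℕ)+1 := by exact_mod_cast a1
      have b2 : (i:ℕ) < (j:ℕ)+1 := by exact_mod_cast a2
      omega
    have : i = j := Fin.ext hij
    rw [this]
  · rw [toCircle_inr] at h1 h2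
    have b1 : (i:ℕ) < (j:ℕ) := by exact_mod_cast h1
    have b2 : (j:ℕ) < (i:ℕ)+1 := by exact_mod_cast h2
    omega

private lemma touches_of_short_crosses {a b : ℤ} {i : Fin n} {r p : Sym2 (MbarPt n)}
    (hr : r = s(inl (a,i), inl (b,i))) (h : Crosses r p) : Touches i p := by
  obtain ⟨x,y,z,w,hp,hq,h1,h2⟩ := h
  rw [hr] at hp
  have hxy := Sym2.eq_iff.mp hp
  have hbx : (i:ℝ) < toCircle x ∧ toCircle x < (i:ℝ)+1 := by
    rcases hxy with ⟨h', _⟩|⟨_, h'⟩ <;> rw [← h'] <;>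
      exact ⟨toCircle_seg_gt _ _, toCircle_seg_lt _ _⟩
  have hby : (i:ℝ) < toCircle y ∧ toCircle y < (i:ℝ)+1 := by
    rcases hxy with ⟨_, h'⟩|⟨h', _⟩ <;> rw [← h'] <;>
      exact ⟨toCircle_seg_gt _ _, toCircle_seg_lt _ _⟩
  unfold CycSBtw at h1 h2
  have key : ((i:ℝ) < toCircle z ∧ toCircle z < (i:ℝ)+1) ∨
      ((i:ℝ) < toCircle w ∧ toCircle w < (i:ℝ)+1) := by
    rcases h1 with ⟨a1,a2⟩|⟨a1,a2⟩|⟨a1,a2⟩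
    · exact Or.inl ⟨by linarith [hbx.1], by linarith [hby.2]⟩
    · rcases h2 with ⟨b1,b2⟩|⟨b1,b2⟩|⟨b1,b2⟩
      · exact Or.inr ⟨by linarith [hby.1], by linarith [hbx.2]⟩
      · exact absurd b2 (by linarith)
      · exact absurd b1 (by linarith)
    · rcases h2 with ⟨b1,b2⟩|⟨b1,b2⟩|⟨b1,b2⟩
      · exact Or.inr ⟨by linarith [hby.1], by linarith [hbx.2]⟩
      · exact absurd b2 (by linarith)
      · exact absurd b1 (by linarith)
  rcases key with ⟨k1,k2⟩|⟨k1,k2⟩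
  · obtain ⟨c, hc⟩ := eq_seg_of_between k1 k2
    exact ⟨c, by rw [hq, ← hc]; exact Sym2.mem_mk_left _ _⟩
  · obtain ⟨c, hc⟩ := eq_seg_of_between k1 k2
    exact ⟨c, by rw [hq, ← hc]; exact Sym2.mem_mk_right _ _⟩

private lemma no_inr_short {a b : ℤ} {i j : Fin n} {r : Sym2 (MbarPt n)}
    (hr : r = s(inl (a,i), inl (b,i))) (h : (inr j : MbarPt n) ∈ r) : False := by
  rw [hr, Sym2.mem_iff] at h
  rcases h with h|h <;> exact absurd h (by simp)

private lemma touches_of_adj_short_left {a b : ℤ} {i : Fin n} {r p : Sym2 (MbarPt n)}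
    (hr : r = s(inl (a,i), inl (b,i))) (h : Adj r p) : Touches i p := by
  rcases h with h | ⟨_, j, h1, _⟩
  · exact touches_of_short_crosses hr h
  · exact absurd h1 (fun hh => no_inr_short hr hh)

private lemma touches_of_adj_short_right {a b : ℤ} {i : Fin n} {r p : Sym2 (MbarPt n)}
    (hr : r = s(inl (a,i), inl (b,i))) (h : Adj p r) : Touches i p :=
  touches_of_adj_short_left hr (adj_symm h)

end ShortArcAux3
section ShortArcAux4

open Sum

variable {n : ℕ}

private lemma chain_trans {T : Set (Sym2 (MbarPt n))} {m₁ m₂ : ℕ} {p q r : Sym2 (MbarPt n)}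
    (h1 : AdjChain T m₁ p q) (h2 : AdjChain T m₂ q r) : AdjChain T (m₁ + m₂) p r := by
  induction m₁ generalizing p with
  | zero =>
    have : p = q := h1
    rw [Nat.zero_add, this]; exact h2
  | succ m ih =>
    obtain ⟨s, hs, hadj, hc⟩ := h1
    rw [Nat.add_right_comm]
    exact ⟨s, hs, hadj, ih hc⟩

private lemma chain_snoc {T : Set (Sym2 (MbarPt n))} {m : ℕ} {p q r : Sym2 (MbarPt n)}
    (h : AdjChain T m p q) (ha : Adj q r) (hr : r ∈ T) : AdjChain T (m+1) p r :=
  chain_trans h ⟨r, hr, ha, rfl⟩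

private lemma short_normalize {p : Sym2 (MbarPt n)} {k k' : ℤ} {i : Fin n}
    (harc : IsArc p) (hp : p = s(inl (k,i), inl (k',i))) :
    ∃ a b : ℤ, p = s(inl (a,i), inl (b,i)) ∧ a + 2 ≤ b := by
  rcases lt_trichotomy k k' with h|h|h
  · refine ⟨k, k', hp, ?_⟩
    have : k' ≠ k + 1 := by
      intro he; exact harc.2 k i (by rw [hp, he])
    omega
  · exfalso
    apply harc.1
    rw [hp, h, Sym2.mk_isDiag_iff]
  · refine ⟨k', k, by rw [hp]; exact Sym2.eq_swap, ?_⟩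
    have : k ≠ k' + 1 := by
      intro he; exact harc.2 k' i (by rw [hp, he]; exact Sym2.eq_swap)
    omega

private lemma off_seg_bound {y : MbarPt n} {i : Fin n} (h : ∀ c : ℤ, y ≠ inl (c,i)) :
    toCircle y ≤ (i:ℝ) ∨ ((i:ℝ)+1 ≤ toCircle y) := by
  rcases y with ⟨k,j⟩ | j
  · have hij : j ≠ i := by
      intro he; exact h k (by rw [he])
    rcases Nat.lt_trichotomy (j:ℕ) (i:ℕ) with hh|hh|hh
    · left
      have := toCircle_seg_lt (n := n) k j
      have hc : ((j:ℕ):ℝ)+1 ≤ ((i:ℕ):ℝ) := by exact_mod_cast hh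
      linarith
    · exact absurd (Fin.ext hh) hij
    · right
      have := toCircle_seg_gt (n := n) k j
      have hc : ((i:ℕ):ℝ)+1 ≤ ((j:ℕ):ℝ) := by exact_mod_cast hh
      linarith
  · rw [toCircle_inr]
    rcases Nat.lt_or_ge (i:ℕ) (j:ℕ) with hh|hh
    · right; exact_mod_cast hh
    · left; exact_mod_cast hh

private lemma adj_rot_one {r : Sym2 (MbarPt n)} {i : Fin n}
    (harc : IsArc r) (ht : Touches i r) : Adj (rotArc 1 r) r := by
  obtain ⟨u, hu⟩ := ht
  obtain ⟨x, hx⟩ := Sym2.mem_iff_exists.mp hu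
  rcases x with ⟨v,j⟩ | j
  · by_cases hij : j = i
    · subst hij
      obtain ⟨a, b, hab, hgap⟩ := short_normalize harc hx
      have hrot : rotArc 1 r = s(inl (a-1,j), inl (b-1,j)) := by rw [hab]; rfl
      refine Or.inl (cross_of_lin (inl (a-1,j)) (inl (b-1,j)) (inl (a,j)) (inl (b,j))
        hrot hab ?_ ?_ (Or.inr ?_))
      · exact seg_mono (by omega)
      · exact seg_mono (by omega)
      · exact seg_mono (by omega)
    · have hrot : rotArc 1 r = s(inl (u-1,i), inl (v-1,j)) := by rw [hx]; rfl
      rcases Nat.lt_trichotomy (i:ℕ) (j:ℕ) with hh|hh|hh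
      · refine Or.inl (cross_of_lin (inl (u-1,i)) (inl (v-1,j)) (inl (u,i)) (inl (v,j))
          hrot hx ?_ ?_ (Or.inr ?_))
        · exact seg_mono (by omega)
        · exact seg_lt_seg hh
        · exact seg_mono (by omega)
      · exact absurd (Fin.ext hh) (fun he => hij he.symm)
      · refine Or.inl (cross_of_lin (inl (v-1,j)) (inl (u-1,i)) (inl (v,j)) (inl (u,i))
          (by rw [hrot]; exact Sym2.eq_swap) (by rw [hx]; exact Sym2.eq_swap)
          ?_ ?_ (Or.inr ?_))
        · exact seg_mono (by omega)
        · exact seg_lt_seg hh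
        · exact seg_mono (by omega)
  · have hrot : rotArc 1 r = s(inl (u-1,i), inr j) := by rw [hx]; rfl
    refine Or.inr ⟨?_, j, ?_, ?_⟩
    · rw [hrot, hx]
      intro he
      rcases Sym2.eq_iff.mp he with ⟨h1, _⟩|⟨h1, _⟩
      · have : u - 1 = u := by
          have := (Sum.inl.injEq _ _).mp h1
          exact (Prod.mk.injEq _ _ _ _).mp this |>.1
        omega
      · simp at h1
    · rw [hrot, Sym2.mem_iff]; right; rfl
    · rw [hx, Sym2.mem_iff]; right; rfl

private lemma chain_to_rot {T : Set (Sym2 (MbarPt n))}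
    (hT : ∀ p ∈ T, ∀ m : ℤ, rotArc m p ∈ T)
    (harcT : ∀ q ∈ T, IsArc q)
    {p : Sym2 (MbarPt n)} (hp : p ∈ T) {i : Fin n} (ht : Touches i p) (t : ℤ) :
    ∃ m : ℕ, AdjChain T m p (rotArc t p) := by
  induction t using Int.induction_on with
  | zero => exact ⟨0, by rw [rotArc_zero]; exact rfl⟩
  | succ k ih =>
    obtain ⟨m, hm⟩ := ih
    have hmem : rotArc ((k:ℤ)+1) p ∈ T := hT p hp _
    have hadj : Adj (rotArc ((k:ℤ)+1) p) (rotArc (k:ℤ) p) := by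
      have h1 := adj_rot_one (harcT _ (hT p hp (k:ℤ))) (touches_rot (k:ℤ) ht)
      rwa [rotArc_rotArc] at h1
    exact ⟨m+1, chain_snoc hm (adj_symm hadj) hmem⟩
  | pred k ih =>
    obtain ⟨m, hm⟩ := ih
    have hmem : rotArc (-(k:ℤ)-1) p ∈ T := hT p hp _
    have hadj : Adj (rotArc (-(k:ℤ)) p) (rotArc (-(k:ℤ)-1) p) := by
      have h1 := adj_rot_one (harcT _ (hT p hp (-(k:ℤ)-1))) (touches_rot (-(k:ℤ)-1) ht)
      rw [rotArc_rotArc] at h1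
      have he : (-(k:ℤ)-1) + 1 = -(k:ℤ) := by ring
      rwa [he] at h1
    exact ⟨m+1, chain_snoc hm hadj hmem⟩

private lemma place1 {i c d e sm sp : ℝ} (hc1 : i < c) (hc2 : c < i+1)
    (hm1 : i < sm) (hm2 : sm < c) (hp1 : c < sp) (hp2 : sp < i+1)
    (he : e ≤ i ∨ i+1 ≤ e) (hd : d ≤ i ∨ i+1 ≤ d) (hed : e ≠ d) :
    AltPt sm e c d ∨ AltPt sp e c d := by
  unfold AltPt
  rcases he with he|he <;> rcases hd with hd|hd
  · rcases lt_or_gt_of_ne hed with h|h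
    · -- e < d ≤ i : sm, right branch
      left; right
      rw [min_eq_right (by linarith : e ≤ sm), max_eq_left (by linarith : e ≤ sm)]
      exact ⟨⟨by linarith, by linarith⟩, Or.inr (by linarith)⟩
    · -- d < e ≤ i : sp, left branch
      right; left
      rw [min_eq_right (by linarith : e ≤ sp), max_eq_left (by linarith : e ≤ sp)]
      exact ⟨⟨by linarith, by linarith⟩, Or.inl (by linarith)⟩
  · -- e ≤ i, d ≥ i+1 : sp, left
    right; left
    rw [min_eq_right (by linarith : e ≤ sp), max_eq_left (by linarith : e ≤ sp)]
    exact ⟨⟨by linarith, by linarith⟩, Or.inr (by linarith)⟩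
  · -- e ≥ i+1, d ≤ i : sm, left
    left; left
    rw [min_eq_left (by linarith : sm ≤ e), max_eq_right (by linarith : sm ≤ e)]
    exact ⟨⟨by linarith, by linarith⟩, Or.inl (by linarith)⟩
  · rcases lt_or_gt_of_ne hed with h|h
    · -- i+1 ≤ e < d : sm, left
      left; left
      rw [min_eq_left (by linarith : sm ≤ e), max_eq_right (by linarith : sm ≤ e)]
      exact ⟨⟨by linarith, by linarith⟩, Or.inr (by linarith)⟩
    · -- i+1 ≤ d < e : sp, right
      right; right
      rw [min_eq_left (by linarith : sp ≤ e), max_eq_right (by linarith : sp ≤ e)]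
      exact ⟨⟨by linarith, by linarith⟩, Or.inl (by linarith)⟩

private lemma place2 {i j c d sm sp em ep : ℝ} (hc1 : i < c) (hc2 : c < i+1)
    (hm1 : i < sm) (hm2 : sm < c) (hp1 : c < sp) (hp2 : sp < i+1)
    (hem1 : j < em) (hem2 : em < j+1) (hep1 : j < ep) (hep2 : ep < j+1)
    (hji : j+1 ≤ i ∨ i+1 ≤ j)
    (hd : d ≤ i ∨ i+1 ≤ d) (hdj : d ≤ j ∨ j+1 ≤ d) :
    AltPt sm em c d ∨ AltPt sp ep c d := by
  unfold AltPt
  rcases hji with hji|hji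
  · rcases hdj with hdj|hdj
    · -- d ≤ j < e ≤ i : sp, left
      right; left
      rw [min_eq_right (by linarith : ep ≤ sp), max_eq_left (by linarith : ep ≤ sp)]
      exact ⟨⟨by linarith, by linarith⟩, Or.inl (by linarith)⟩
    · rcases hd with hd|hd
      · -- e < j+1 ≤ d ≤ i : sm, right
        left; right
        rw [min_eq_right (by linarith : em ≤ sm), max_eq_left (by linarith : em ≤ sm)]
        exact ⟨⟨by linarith, by linarith⟩, Or.inr (by linarith)⟩
      · -- e ≤ i, d ≥ i+1 : sp, left
        right; left
        rw [min_eq_right (by linarith : ep ≤ sp), max_eq_left (by linarith : ep ≤ sp)]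
        exact ⟨⟨by linarith, by linarith⟩, Or.inr (by linarith)⟩
  · rcases hd with hd|hd
    · -- e ≥ i+1, d ≤ i : sm, left
      left; left
      rw [min_eq_left (by linarith : sm ≤ em), max_eq_right (by linarith : sm ≤ em)]
      exact ⟨⟨by linarith, by linarith⟩, Or.inl (by linarith)⟩
    · rcases hdj with hdj|hdj
      · -- i+1 ≤ d ≤ j < e : sp, right
        right; right
        rw [min_eq_left (by linarith : sp ≤ ep), max_eq_right (by linarith : sp ≤ ep)]
        exact ⟨⟨by linarith, by linarith⟩, Or.inl (by linarith)⟩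
      · -- i+1 ≤ j, d ≥ j+1 > e : sm, left
        left; left
        rw [min_eq_left (by linarith : sm ≤ em), max_eq_right (by linarith : sm ≤ em)]
        exact ⟨⟨by linarith, by linarith⟩, Or.inr (by linarith)⟩

end ShortArcAux4
section ShortArcAux5

open Sum

variable {n : ℕ}

private lemma fin_cast_sides (i j : Fin n) :
    ((j:ℕ):ℝ) ≤ ((i:ℕ):ℝ) ∨ ((i:ℕ):ℝ)+1 ≤ ((j:ℕ):ℝ) := by
  rcases Nat.lt_or_ge (i:ℕ) (j:ℕ) with h|h
  · right; exact_mod_cast h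
  · left; exact_mod_cast h

private lemma fin_cast_gap {i j : Fin n} (h : i ≠ j) :
    ((j:ℕ):ℝ)+1 ≤ ((i:ℕ):ℝ) ∨ ((i:ℕ):ℝ)+1 ≤ ((j:ℕ):ℝ) := by
  rcases Nat.lt_trichotomy (i:ℕ) (j:ℕ) with hh|hh|hh
  · right; exact_mod_cast hh
  · exact absurd (Fin.ext hh) h
  · left; exact_mod_cast hh

private lemma cross_exists {i : Fin n} {a b : Sym2 (MbarPt n)}
    (ha : IsArc a) (hb : IsArc b) (hta : Touches i a) (htb : Touches i b) :
    ∃ t : ℤ, rotArc t a = b ∨ Adj (rotArc t a) b := by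
  obtain ⟨u, hu⟩ := hta
  obtain ⟨x, hx⟩ := Sym2.mem_iff_exists.mp hu
  obtain ⟨v, hv⟩ := htb
  obtain ⟨y, hy⟩ := Sym2.mem_iff_exists.mp hv
  by_cases hsa : ∃ u', x = inl (u', i)
  · -- a is a short arc on segment i
    obtain ⟨u', rfl⟩ := hsa
    obtain ⟨a0, b0, hab, hgap⟩ := short_normalize ha hx
    by_cases hsb : ∃ v', y = inl (v', i)
    · -- b short as well
      obtain ⟨v', rfl⟩ := hsb
      obtain ⟨c0, d0, hcd, hgap'⟩ := short_normalize hb hy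
      refine ⟨a0 - (d0 - 1), Or.inr (Or.inl (cross_of_lin
        (inl (d0-1,i)) (inl (b0 - a0 + d0 - 1, i)) (inl (d0,i)) (inl (c0,i))
        ?_ (hcd.trans Sym2.eq_swap) (seg_mono (by omega)) (seg_mono (by omega))
        (Or.inl (seg_mono (by omega)))))⟩
      rw [hab]
      show s(inl (a0 - (a0 - (d0-1)), i), inl (b0 - (a0 - (d0-1)), i)) = _
      have e1 : a0 - (a0 - (d0-1)) = d0 - 1 := by ring
      have e2 : b0 - (a0 - (d0-1)) = b0 - a0 + d0 - 1 := by ring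
      rw [e1, e2]
    · -- y is off segment i
      have hyoff : ∀ c : ℤ, y ≠ inl (c, i) := fun c hc => hsb ⟨c, hc⟩
      have hyb := off_seg_bound hyoff
      refine ⟨a0 - (v - 1), Or.inr (Or.inl (cross_of_lin
        (inl (v-1,i)) (inl (b0 - a0 + v - 1, i)) (inl (v,i)) y
        ?_ hy (seg_mono (by omega)) (seg_mono (by omega)) ?_))⟩
      · rw [hab]
        show s(inl (a0 - (a0 - (v-1)), i), inl (b0 - (a0 - (v-1)), i)) = _
        have e1 : a0 - (a0 - (v-1)) = v - 1 := by ring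
        have e2 : b0 - (a0 - (v-1)) = b0 - a0 + v - 1 := by ring
        rw [e1, e2]
      · rcases hyb with hh|hh
        · exact Or.inl (lt_of_le_of_lt hh (toCircle_seg_gt _ _))
        · exact Or.inr (lt_of_lt_of_le (toCircle_seg_lt _ _) hh)
  · have hxoff : ∀ c : ℤ, x ≠ inl (c, i) := fun c hc => hsa ⟨c, hc⟩
    have hxb := off_seg_bound hxoff
    by_cases hsb : ∃ v', y = inl (v', i)
    · -- b short, a not
      obtain ⟨v', rfl⟩ := hsb
      obtain ⟨c0, d0, hcd, hgap'⟩ := short_normalize hb hy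
      have hcr : Crosses (rotArc (c0 - (u - 1)) b) a := by
        refine cross_of_lin
          (inl (u-1,i)) (inl (d0 - c0 + u - 1, i)) (inl (u,i)) x
          ?_ hx (seg_mono (by omega)) (seg_mono (by omega)) ?_
        · rw [hcd]
          show s(inl (c0 - (c0 - (u-1)), i), inl (d0 - (c0 - (u-1)), i)) = _
          have e1 : c0 - (c0 - (u-1)) = u - 1 := by ring
          have e2 : d0 - (c0 - (u-1)) = d0 - c0 + u - 1 := by ring
          rw [e1, e2]
        · rcases hxb with hh|hh
          · exact Or.inl (lt_of_le_of_lt hh (toCircle_seg_gt _ _))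
          · exact Or.inr (lt_of_lt_of_le (toCircle_seg_lt _ _) hh)
      exact ⟨-(c0 - (u - 1)), Or.inr (Or.inl (crosses_shift (crosses_symm hcr)))⟩
    · -- neither short
      have hyoff : ∀ c : ℤ, y ≠ inl (c, i) := fun c hc => hsb ⟨c, hc⟩
      have hyb := off_seg_bound hyoff
      rcases x with ⟨w0, jx⟩ | jx
      · -- x = inl (w0, jx), jx ≠ i
        have hjxi : jx ≠ i := by
          intro he; exact hxoff w0 (by rw [he])
        by_cases hsyj : ∃ s0, y = inl (s0, jx)
        · -- y on segment jx as well
          obtain ⟨s0, rfl⟩ := hsyj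
          rcases Nat.lt_trichotomy (i:ℕ) (jx:ℕ) with hh|hh|hh
          · -- i < jx
            refine ⟨min (u - v) (w0 - s0) - 1, Or.inr (Or.inl (cross_of_alt'
              (inl (u - (min (u - v) (w0 - s0) - 1), i))
              (inl (w0 - (min (u - v) (w0 - s0) - 1), jx))
              (inl (v,i)) (inl (s0,jx)) (by rw [hx]; rfl) hy ?_ ?_ (Or.inr ?_)))⟩
            · rw [min_eq_left (le_of_lt (seg_lt_seg hh))]
              exact seg_mono (by omega)
            · rw [max_eq_right (le_of_lt (seg_lt_seg hh))]
              exact seg_lt_seg hh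
            · rw [max_eq_right (le_of_lt (seg_lt_seg hh))]
              exact seg_mono (by omega)
          · exact absurd (Fin.ext hh) (fun he => hjxi he.symm)
          · -- jx < i
            refine ⟨max (u - v) (w0 - s0) + 1, Or.inr (Or.inl (cross_of_alt'
              (inl (u - (max (u - v) (w0 - s0) + 1), i))
              (inl (w0 - (max (u - v) (w0 - s0) + 1), jx))
              (inl (v,i)) (inl (s0,jx)) (by rw [hx]; rfl) hy ?_ ?_ (Or.inl ?_)))⟩
            · rw [min_eq_right (le_of_lt (seg_lt_seg hh))]
              exact seg_lt_seg hh
            · rw [max_eq_left (le_of_lt (seg_lt_seg hh))]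
              exact seg_mono (by omega)
            · rw [min_eq_right (le_of_lt (seg_lt_seg hh))]
              exact seg_mono (by omega)
        · -- y off segment jx (and off segment i)
          have hyoffj : ∀ c : ℤ, y ≠ inl (c, jx) := fun c hc => hsyj ⟨c, hc⟩
          have hybj := off_seg_bound hyoffj
          have hplace := place2 (i := ((i:ℕ):ℝ)) (j := ((jx:ℕ):ℝ))
            (c := toCircle (inl (v,i) : MbarPt n)) (d := toCircle y)
            (sm := toCircle (inl (v-1,i) : MbarPt n)) (sp := toCircle (inl (v+1,i) : MbarPt n))
            (em := toCircle (inl (w0 - u + v - 1, jx) : MbarPt n))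
            (ep := toCircle (inl (w0 - u + v + 1, jx) : MbarPt n))
            (toCircle_seg_gt _ _) (toCircle_seg_lt _ _)
            (toCircle_seg_gt _ _) (seg_mono (by omega)) (seg_mono (by omega)) (toCircle_seg_lt _ _)
            (toCircle_seg_gt _ _) (toCircle_seg_lt _ _) (toCircle_seg_gt _ _) (toCircle_seg_lt _ _)
            (fin_cast_gap (Ne.symm hjxi)) hyb hybj
          rcases hplace with hpl|hpl
          · refine ⟨u - (v - 1), Or.inr (Or.inl (crosses_of_altpt
              (X := inl (v-1,i)) (Y := inl (w0 - u + v - 1, jx))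
              (Z := inl (v,i)) (W := y) ?_ hy hpl))⟩
            rw [hx]
            show s(inl (u - (u - (v-1)), i), inl (w0 - (u - (v-1)), jx)) = _
            have e1 : u - (u - (v-1)) = v - 1 := by ring
            have e2 : w0 - (u - (v-1)) = w0 - u + v - 1 := by ring
            rw [e1, e2]
          · refine ⟨u - (v + 1), Or.inr (Or.inl (crosses_of_altpt
              (X := inl (v+1,i)) (Y := inl (w0 - u + v + 1, jx))
              (Z := inl (v,i)) (W := y) ?_ hy hpl))⟩
            rw [hx]
            show s(inl (u - (u - (v+1)), i), inl (w0 - (u - (v+1)), jx)) = _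
            have e1 : u - (u - (v+1)) = v + 1 := by ring
            have e2 : w0 - (u - (v+1)) = w0 - u + v + 1 := by ring
            rw [e1, e2]
      · -- x = inr jx
        by_cases hyx : y = inr jx
        · -- shared accumulation point
          subst hyx
          refine ⟨u - (v - 1), Or.inr (Or.inr (⟨?_, jx, ?_, ?_⟩))⟩
          · rw [hx, hy]
            show s(inl (u - (u - (v-1)), i), inr jx) ≠ _
            have e1 : u - (u - (v-1)) = v - 1 := by ring
            rw [e1]
            intro he
            rcases Sym2.eq_iff.mp he with ⟨h1, _⟩|⟨h1, _⟩
            · have h2 : v - 1 = v := by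
                have := (Sum.inl.injEq _ _).mp h1
                exact ((Prod.mk.injEq _ _ _ _).mp this).1
              omega
            · simp at h1
          · rw [hx]
            show (inr jx : MbarPt n) ∈ s(inl (u - (u - (v-1)), i), inr jx)
            rw [Sym2.mem_iff]; right; rfl
          · rw [hy, Sym2.mem_iff]; right; rfl
        · -- x = inr jx and y is a different point off segment i
          have hed : toCircle (inr jx : MbarPt n) ≠ toCircle y := by
            rcases y with ⟨s0, jy⟩ | jy
            · have h1 := toCircle_seg_gt (n := n) s0 jy
              have h2 := toCircle_seg_lt (n := n) s0 jy
              rw [toCircle_inr]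
              rcases fin_cast_sides jy jx with hh|hh
              · intro he; rw [← he] at h2; linarith
              · intro he; rw [← he] at h1; linarith
            · have : jx ≠ jy := fun he => hyx (by rw [he])
              rw [toCircle_inr, toCircle_inr]
              intro he
              exact this (Fin.ext (by exact_mod_cast he))
          have hplace := place1 (i := ((i:ℕ):ℝ))
            (c := toCircle (inl (v,i) : MbarPt n)) (d := toCircle y)
            (e := toCircle (inr jx : MbarPt n))
            (sm := toCircle (inl (v-1,i) : MbarPt n)) (sp := toCircle (inl (v+1,i) : MbarPt n))
            (toCircle_seg_gt _ _) (toCircle_seg_lt _ _)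
            (toCircle_seg_gt _ _) (seg_mono (by omega)) (seg_mono (by omega)) (toCircle_seg_lt _ _)
            (by rw [toCircle_inr]; exact fin_cast_sides i jx) hyb hed
          rcases hplace with hpl|hpl
          · refine ⟨u - (v - 1), Or.inr (Or.inl (crosses_of_altpt
              (X := inl (v-1,i)) (Y := inr jx)
              (Z := inl (v,i)) (W := y) ?_ hy hpl))⟩
            rw [hx]
            show s(inl (u - (u - (v-1)), i), inr jx) = _
            have e1 : u - (u - (v-1)) = v - 1 := by ring
            rw [e1]
          · refine ⟨u - (v + 1), Or.inr (Or.inl (crosses_of_altpt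
              (X := inl (v+1,i)) (Y := inr jx)
              (Z := inl (v,i)) (W := y) ?_ hy hpl))⟩
            rw [hx]
            show s(inl (u - (u - (v+1)), i), inr jx) = _
            have e1 : u - (u - (v+1)) = v + 1 := by ring
            rw [e1]

end ShortArcAux5
section ShortArcAux6

open Sum

variable {n : ℕ}

private lemma mem_rclos_self {T : Set (Sym2 (MbarPt n))} {p : Sym2 (MbarPt n)} (h : p ∈ T) :
    p ∈ RClos T := ⟨p, h, 0, (rotArc_zero p).symm⟩

private lemma rclos_rot {T : Set (Sym2 (MbarPt n))} {p : Sym2 (MbarPt n)}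
    (h : p ∈ RClos T) (m : ℤ) : rotArc m p ∈ RClos T := by
  obtain ⟨q, hq, t, rfl⟩ := h
  exact ⟨q, hq, t + m, by rw [rotArc_rotArc]⟩

private lemma rclos_mono {T T' : Set (Sym2 (MbarPt n))} (h : T ⊆ T') :
    RClos T ⊆ RClos T' := by
  rintro q ⟨p, hp, m, rfl⟩
  exact ⟨p, h hp, m, rfl⟩

private lemma rclos_isArc {T : Set (Sym2 (MbarPt n))} (h : ∀ p ∈ T, IsArc p) :
    ∀ q ∈ RClos T, IsArc q := by
  rintro q ⟨p, hp, m, rfl⟩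
  exact isArc_rot m (h p hp)

private lemma conn_touch {T : Set (Sym2 (MbarPt n))}
    (harcT : ∀ q ∈ T, IsArc q) {i : Fin n} {p b : Sym2 (MbarPt n)}
    (hp : p ∈ RClos T) (hb : b ∈ RClos T)
    (htp : Touches i p) (htb : Touches i b) : ∃ m, AdjChain (RClos T) m p b := by
  have hT : ∀ q ∈ RClos T, ∀ m : ℤ, rotArc m q ∈ RClos T := fun q hq m => rclos_rot hq m
  have harcT' := rclos_isArc harcT
  obtain ⟨t, ht⟩ := cross_exists (harcT' p hp) (harcT' b hb) htp htb
  obtain ⟨m, hm⟩ := chain_to_rot hT harcT' hp htp t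
  rcases ht with h|h
  · exact ⟨m, h ▸ hm⟩
  · exact ⟨m+1, chain_snoc hm h hb⟩

end ShortArcAux6
section ShortArcAux7

open Sum

variable {n : ℕ}

private lemma rot_short_form {k k' t : ℤ} {i : Fin n} {ℓ : Sym2 (MbarPt n)}
    (hℓ : ℓ = s(inl (k,i), inl (k',i))) :
    rotArc t ℓ = s(inl (k - t, i), inl (k' - t, i)) := by rw [hℓ]; rfl

private lemma exists_other_touch (hn : 1 ≤ n) {S : Finset (Sym2 (MbarPt n))}
    (hconn : ConnectedArcs (↑S : Set (Sym2 (MbarPt n))))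
    (horb : CompleteOrbit (↑S : Set (Sym2 (MbarPt n))))
    {k k' : ℤ} {i : Fin n} {ℓ : Sym2 (MbarPt n)} (hℓS : ℓ ∈ S)
    (hℓ : ℓ = s(inl (k,i), inl (k',i))) :
    ∃ ℓ' ∈ S, ℓ' ≠ ℓ ∧ Touches i ℓ' := by
  by_contra hno
  push_neg at hno
  have key : ∀ q ∈ RClos (↑S : Set (Sym2 (MbarPt n))), Touches i q → ∃ t, q = rotArc t ℓ := by
    rintro q ⟨p, hp, m, rfl⟩ htq
    have htp : Touches i p := touches_of_rot htq
    by_cases hpl : p = ℓ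
    · exact ⟨m, by rw [hpl]⟩
    · exact absurd htp (hno p (by exact_mod_cast hp) hpl)
  obtain ⟨q, hq, hmem⟩ := horb (inr (⟨0, hn⟩ : Fin n))
  have hc := hconn ℓ (mem_rclos_self (by exact_mod_cast hℓS)) q hq
  obtain ⟨m, hm⟩ := hc
  have reach : ∀ m (p q' : Sym2 (MbarPt n)), (∃ t, p = rotArc t ℓ) →
      AdjChain (RClos (↑S : Set (Sym2 (MbarPt n)))) m p q' → ∃ t, q' = rotArc t ℓ := by
    intro m
    induction m with
    | zero => rintro p q' hp h; rw [← h]; exact hp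
    | succ m ih =>
      rintro p q' ⟨t, rfl⟩ ⟨r, hr, hadj, hchain⟩
      have htr : Touches i r := touches_of_adj_short_left (rot_short_form hℓ) hadj
      exact ih r q' (key r hr htr) hchain
  obtain ⟨t, rfl⟩ := reach m ℓ q ⟨0, (rotArc_zero ℓ).symm⟩ hm
  have : (inr (⟨0, hn⟩ : Fin n) : MbarPt n) ∈ ℓ := (inr_mem_rot t).mp hmem
  exact no_inr_short hℓ this

private lemma orbit_without_short
    {S : Finset (Sym2 (MbarPt n))} (horb : CompleteOrbit (↑S : Set (Sym2 (MbarPt n))))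
    {k k' : ℤ} {i : Fin n} {ℓ : Sym2 (MbarPt n)}
    (hℓ : ℓ = s(inl (k,i), inl (k',i)))
    {ℓ' : Sym2 (MbarPt n)} (hℓ'S : ℓ' ∈ S) (hℓ'ne : ℓ' ≠ ℓ) (hℓ't : Touches i ℓ') :
    CompleteOrbit ((↑S : Set (Sym2 (MbarPt n))) \ {ℓ}) := by
  intro x
  rcases x with ⟨c, j⟩ | j
  · by_cases hji : j = i
    · subst hji
      obtain ⟨c0, hc0⟩ := hℓ't
      refine ⟨rotArc (c0 - c) ℓ',
        ⟨ℓ', ⟨by exact_mod_cast hℓ'S, by simpa using hℓ'ne⟩, c0 - c, rfl⟩, ?_⟩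
      have he : rotPt (c0 - c) (inl (c0, j) : MbarPt n) = inl (c, j) := by
        show (inl (c0 - (c0 - c), j) : MbarPt n) = _
        have e : c0 - (c0 - c) = c := by ring
        rw [e]
      rw [← he]
      exact Sym2.mem_map.mpr ⟨_, hc0, rfl⟩
    · obtain ⟨q, ⟨p, hp, m, rfl⟩, hmem⟩ := horb (inl (c, j))
      refine ⟨rotArc m p, ⟨p, ⟨hp, ?_⟩, m, rfl⟩, hmem⟩
      intro hpl
      rw [Set.mem_singleton_iff] at hpl
      subst hpl
      rw [rot_short_form hℓ, Sym2.mem_iff] at hmem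
      rcases hmem with h|h <;>
        · have := ((Prod.mk.injEq _ _ _ _).mp ((Sum.inl.injEq _ _).mp h)).2
          exact hji this
  · obtain ⟨q, ⟨p, hp, m, rfl⟩, hmem⟩ := horb (inr j)
    refine ⟨rotArc m p, ⟨p, ⟨hp, ?_⟩, m, rfl⟩, hmem⟩
    intro hpl
    rw [Set.mem_singleton_iff] at hpl
    subst hpl
    exact no_inr_short (rot_short_form hℓ) hmem

private lemma surg
    {S : Finset (Sym2 (MbarPt n))} (harc : ∀ p ∈ S, IsArc p)
    {k k' : ℤ} {i : Fin n} {ℓ : Sym2 (MbarPt n)}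
    (hℓ : ℓ = s(inl (k,i), inl (k',i))) :
    ∀ (m : ℕ) (p q : Sym2 (MbarPt n)),
      AdjChain (RClos (↑S : Set (Sym2 (MbarPt n)))) m p q →
      q ∈ RClos ((↑S : Set (Sym2 (MbarPt n))) \ {ℓ}) →
      (p ∈ RClos ((↑S : Set (Sym2 (MbarPt n))) \ {ℓ}) →
        ∃ m', AdjChain (RClos ((↑S : Set (Sym2 (MbarPt n))) \ {ℓ})) m' p q) ∧
      ((∃ t, p = rotArc t ℓ) →
        ∃ b ∈ RClos ((↑S : Set (Sym2 (MbarPt n))) \ {ℓ}), Touches i b ∧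
          ∃ m', AdjChain (RClos ((↑S : Set (Sym2 (MbarPt n))) \ {ℓ})) m' b q) := by
  have harcT' : ∀ q ∈ (↑S : Set (Sym2 (MbarPt n))) \ {ℓ}, IsArc q :=
    fun q hq => harc q (by exact_mod_cast hq.1)
  have hdich : ∀ r ∈ RClos (↑S : Set (Sym2 (MbarPt n))),
      r ∈ RClos ((↑S : Set (Sym2 (MbarPt n))) \ {ℓ}) ∨ ∃ t, r = rotArc t ℓ := by
    rintro r ⟨p, hp, m, rfl⟩
    by_cases hpl : p = ℓ
    · right; exact ⟨m, by rw [hpl]⟩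
    · left; exact ⟨p, ⟨hp, by simpa using hpl⟩, m, rfl⟩
  have hltouch : ∀ t : ℤ, Touches i (rotArc t ℓ) := by
    intro t
    refine ⟨k - t, ?_⟩
    rw [rot_short_form hℓ, Sym2.mem_iff]; left; rfl
  intro m
  induction m with
  | zero =>
    intro p q h hq
    have hpq : p = q := h
    subst hpq
    constructor
    · intro _; exact ⟨0, rfl⟩
    · rintro ⟨t, rfl⟩
      exact ⟨rotArc t ℓ, hq, hltouch t, 0, rfl⟩
  | succ m ih =>
    rintro p q ⟨r, hrR, hadj, hchain⟩ hq
    rcases hdich r hrR with hrT | ⟨t0, rfl⟩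
    · have IH1 := (ih r q hchain hq).1 hrT
      constructor
      · intro _
        obtain ⟨m', hm'⟩ := IH1
        exact ⟨m' + 1, r, hrT, hadj, hm'⟩
      · rintro ⟨t, rfl⟩
        have htr : Touches i r := touches_of_adj_short_left (rot_short_form hℓ) hadj
        obtain ⟨m', hm'⟩ := IH1
        exact ⟨r, hrT, htr, m', hm'⟩
    · have IH2 := (ih (rotArc t0 ℓ) q hchain hq).2 ⟨t0, rfl⟩
      constructor
      · intro hp
        have htp : Touches i p := touches_of_adj_short_right (rot_short_form hℓ) hadj
        obtain ⟨b, hb, htb, m', hm'⟩ := IH2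
        obtain ⟨m'', hm''⟩ := conn_touch harcT' hp hb htp htb
        exact ⟨m'' + m', chain_trans hm'' hm'⟩
      · rintro ⟨t, rfl⟩
        exact IH2

end ShortArcAux7
/-- Corollary 5.5 of the paper: if `S` is a finite set of arcs of `M̄ₙ`
(`n ≥ 1`) which is connected, has complete orbit and is minimal, then no element of `S`
is a short arc. Equivalently, an indecomposable object of the Paquette–Yıldırım category
`C̄ₙ` corresponding to a short arc cannot be a direct summand of a minimal strong
generator of `C̄ₙ`. -/
theorem no_short_arc_in_minimal_generator (n : ℕ) (hn : 1 ≤ n)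
    (S : Finset (Sym2 (MbarPt n)))
    (harc : ∀ p ∈ S, IsArc p)
    (hconn : ConnectedArcs (↑S : Set (Sym2 (MbarPt n))))
    (horb : CompleteOrbit (↑S : Set (Sym2 (MbarPt n))))
    (hmin : MinimalArcSet (↑S : Set (Sym2 (MbarPt n)))) :
    ∀ p ∈ S, ¬ IsShortArc p := by
  intro p hp hshort
  obtain ⟨k, k', i, hpe⟩ := hshort
  refine hmin p (by exact_mod_cast hp) ⟨?_, ?_⟩
  · -- connectedness survives removing the short arc
    intro a ha b hb
    have haS := rclos_mono Set.diff_subset ha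
    have hbS := rclos_mono Set.diff_subset hb
    obtain ⟨m, hm⟩ := hconn a haS b hbS
    exact (surg harc hpe m a b hm hb).1 ha
  · -- complete orbit survives removing the short arc
    obtain ⟨ℓ', hℓ'S, hne, ht⟩ := exists_other_touch hn hconn horb hp hpe
    exact orbit_without_short horb hpe hℓ'S hne ht
end

section
/- Let n = 1. Every finite set S of arcs of M̄₁ which is connected, has complete orbit and is minimal has homological length exactly 1. (Equivalently: every minimal generator of the Paquette–Yıldırım category C̄₁ has homological length 1, whence the Orlov spectrum of C̄₁ equals {1}.) -/
/-! ### Auxiliary material for the proof -/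

section C1Aux

/-- The circle coordinate of the `k`-th marked point of the unique segment of `M̄₁`. -/
noncomputable def tcA (k : ℤ) : ℝ := 1/2 + (k:ℝ)/(2*(|(k:ℝ)|+1))

lemma tcA_pos (k : ℤ) : 0 < tcA k := by
  have hd : (0:ℝ) < 2*(|(k:ℝ)|+1) := by positivity
  have h : -(|(k:ℝ)|) ≤ (k:ℝ) := neg_abs_le _
  have h2 : -(1/2 : ℝ) < (k:ℝ)/(2*(|(k:ℝ)|+1)) := by
    rw [lt_div_iff₀ hd]; nlinarith [abs_nonneg (k:ℝ)]
  unfold tcA; linarith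

lemma tcA_mono {j l : ℤ} (h : j < l) : tcA j < tcA l := by
  have hj : (j:ℝ) < l := by exact_mod_cast h
  have hdj : (0:ℝ) < 2*(|(j:ℝ)|+1) := by positivity
  have hdl : (0:ℝ) < 2*(|(l:ℝ)|+1) := by positivity
  have h2 : (j:ℝ)/(2*(|(j:ℝ)|+1)) < (l:ℝ)/(2*(|(l:ℝ)|+1)) := by
    rw [div_lt_div_iff₀ hdj hdl]
    rcases abs_cases (j:ℝ) with ⟨e,he⟩|⟨e,he⟩ <;> rcases abs_cases (l:ℝ) with ⟨f,hf⟩|⟨f,hf⟩ <;>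
      rw [e, f] <;> nlinarith
  unfold tcA; linarith

lemma toCircle_inlA (k : ℤ) (i : Fin 1) : toCircle (Sum.inl (k, i) : MbarPt 1) = tcA k := by
  have : i = 0 := Subsingleton.elim _ _
  subst this
  simp [toCircle, tcA]

lemma toCircle_inrA (i : Fin 1) : toCircle (Sum.inr i : MbarPt 1) = 0 := by
  have : i = 0 := Subsingleton.elim _ _
  subst this
  simp [toCircle]

/-- The arc of `M̄₁` joining the `m`-th marked point to the accumulation point. -/
def R1 (m : ℤ) : Sym2 (MbarPt 1) := s(Sum.inl (m, 0), Sum.inr 0)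

lemma R1_ne {m m' : ℤ} (h : m ≠ m') : R1 m ≠ R1 m' := by
  simp [R1, Sym2.eq_iff, h]

lemma mem_R1 (m : ℤ) : (Sum.inr 0 : MbarPt 1) ∈ R1 m := by simp [R1]

lemma rotArc_R1 (m m' : ℤ) : rotArc m (R1 m') = R1 (m' - m) := by
  simp [R1, rotArc, rotPt]

lemma rotArc_zeroA (p : Sym2 (MbarPt 1)) : rotArc 0 p = p := by
  induction p using Sym2.ind with
  | _ x y =>
    rcases x with ⟨k, i⟩ | i <;> rcases y with ⟨l, j⟩ | j <;> simp [rotArc, rotPt]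

lemma isArc_rotArc {m : ℤ} {p : Sym2 (MbarPt 1)} (hp : IsArc p) : IsArc (rotArc m p) := by
  induction p using Sym2.ind with
  | _ x y =>
    constructor
    · intro h
      apply hp.1
      rcases x with ⟨k, i⟩ | i <;> rcases y with ⟨l, j⟩ | j <;>
        simp_all [rotArc, rotPt, Sym2.mk_isDiag_iff] <;> omega
    · intro k i h
      rcases x with ⟨k', i'⟩ | i' <;> rcases y with ⟨l', j'⟩ | j' <;>
        simp [rotArc, rotPt, Sym2.eq_iff] at h
      rcases h with ⟨⟨h1, h2⟩, h3, h4⟩ | ⟨⟨h1, h2⟩, h3, h4⟩ <;>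
        [exact hp.2 (k + m) i (by subst h2 h4; rw [show k' = k + m by omega, show l' = k + m + 1 by omega]);
         exact hp.2 (k + m) i (by subst h2 h4; rw [show l' = k + m by omega, show k' = k + m + 1 by omega, Sym2.eq_swap])]

lemma crosses_mid {j l m : ℤ} (h1 : j < m) (h2 : m < l) :
    Crosses (s(Sum.inl (j,0), Sum.inl (l,0)) : Sym2 (MbarPt 1)) (R1 m) := by
  refine ⟨Sum.inl (j,0), Sum.inl (l,0), Sum.inl (m,0), Sum.inr 0, rfl, rfl, ?_, ?_⟩
  · left
    rw [toCircle_inlA, toCircle_inlA, toCircle_inlA]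
    exact ⟨tcA_mono h1, tcA_mono h2⟩
  · right; left
    rw [toCircle_inlA, toCircle_inlA, toCircle_inrA]
    exact ⟨tcA_pos j, tcA_mono (h1.trans h2)⟩

lemma crosses_mid' {j l m : ℤ} (h1 : j < m) (h2 : m < l) :
    Crosses (R1 m) (s(Sum.inl (j,0), Sum.inl (l,0)) : Sym2 (MbarPt 1)) := by
  refine ⟨Sum.inl (m,0), Sum.inr 0, Sum.inl (l,0), Sum.inl (j,0), rfl, Sym2.eq_swap, ?_, ?_⟩
  · right; right
    rw [toCircle_inlA, toCircle_inlA, toCircle_inrA]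
    exact ⟨tcA_pos m, tcA_mono h2⟩
  · left
    rw [toCircle_inlA, toCircle_inlA, toCircle_inrA]
    exact ⟨tcA_pos j, tcA_mono h1⟩

/-- Any arc of `M̄₁` is adjacent (in both argument orders) to some `R1 m`. -/
lemma adj_R1 {p : Sym2 (MbarPt 1)} (hp : IsArc p) :
    ∃ m : ℤ, Adj p (R1 m) ∧ Adj (R1 m) p := by
  induction p using Sym2.ind with
  | _ x y =>
    rcases x with ⟨j, i⟩ | i <;> rcases y with ⟨l, i'⟩ | i'
    · obtain rfl : i = 0 := Subsingleton.elim _ _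
      obtain rfl : i' = 0 := Subsingleton.elim _ _
      have hne : j ≠ l := by
        intro h; exact hp.1 (by simp [Sym2.mk_isDiag_iff, h])
      have hne1 : l ≠ j + 1 := by
        intro h; exact hp.2 j 0 (by rw [h])
      have hne2 : j ≠ l + 1 := by
        intro h; exact hp.2 l 0 (by rw [h, Sym2.eq_swap])
      rcases lt_trichotomy j l with hlt | heq | hgt
      · exact ⟨j + 1, Or.inl (crosses_mid (by omega) (by omega)),
          Or.inl (crosses_mid' (by omega) (by omega))⟩
      · exact absurd heq hne
      · refine ⟨l + 1, Or.inl ?_, Or.inl ?_⟩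
        · rw [Sym2.eq_swap]; exact crosses_mid (by omega) (by omega)
        · have := crosses_mid' (j := l) (l := j) (m := l + 1) (by omega) (by omega)
          rwa [Sym2.eq_swap] at this
    · obtain rfl : i = 0 := Subsingleton.elim _ _
      obtain rfl : i' = 0 := Subsingleton.elim _ _
      have hne : (s(Sum.inl (j,0), Sum.inr 0) : Sym2 (MbarPt 1)) ≠ R1 (j+1) := by
        simp [R1, Sym2.eq_iff]
      exact ⟨j + 1, Or.inr ⟨hne, 0, by simp, mem_R1 _⟩,
        Or.inr ⟨hne.symm, 0, mem_R1 _, by simp⟩⟩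
    · obtain rfl : i = 0 := Subsingleton.elim _ _
      obtain rfl : i' = 0 := Subsingleton.elim _ _
      have hne : (s(Sum.inr 0, Sum.inl (l,0)) : Sym2 (MbarPt 1)) ≠ R1 (l+1) := by
        simp [R1, Sym2.eq_iff]
      exact ⟨l + 1, Or.inr ⟨hne, 0, by simp, mem_R1 _⟩,
        Or.inr ⟨hne.symm, 0, mem_R1 _, by simp⟩⟩
    · exact absurd (by simp [Sym2.mk_isDiag_iff, Subsingleton.elim i i']) hp.1

end C1Aux

/-- Corollary 5.13 of the paper: every finite set `S` of arcs of `M̄₁`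
which is connected, has complete orbit and is minimal has homological length exactly `1`.
Equivalently, every minimal generator of the Paquette–Yıldırım category `C̄₁` has
homological length `1`, whence the Orlov spectrum of `C̄₁` equals `{1}`. -/
theorem homological_length_eq_one_of_minimal_generator_C1
    (S : Finset (Sym2 (MbarPt 1)))
    (harc : ∀ p ∈ S, IsArc p)
    (hconn : ConnectedArcs (↑S : Set (Sym2 (MbarPt 1))))
    (horb : CompleteOrbit (↑S : Set (Sym2 (MbarPt 1))))
    (hmin : MinimalArcSet (↑S : Set (Sym2 (MbarPt 1)))) :
    HLenEq (↑S : Set (Sym2 (MbarPt 1))) 1 := by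
  -- Step 1: extract an arc of `S` containing the accumulation point; it has the form `R1 k`.
  obtain ⟨p, ⟨p₀, hp₀S, m, rfl⟩, hmem⟩ := horb (Sum.inr 0)
  rw [rotArc, Sym2.mem_map] at hmem
  obtain ⟨a, ha, haeq⟩ := hmem
  have ha0 : a = Sum.inr 0 := by
    rcases a with ⟨k, i⟩ | i
    · simp [rotPt] at haeq
    · exact congrArg Sum.inr (Subsingleton.elim _ _)
  subst ha0
  -- decompose p₀
  obtain ⟨x, y, rfl⟩ : ∃ x y, p₀ = s(x, y) :=
    Sym2.ind (f := fun p => ∃ x y, p = s(x, y)) (fun x y => ⟨x, y, rfl⟩) p₀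
  have harc₀ := harc _ (Finset.mem_coe.mp hp₀S)
  have hkey : ∃ k : ℤ, s(x, y) = R1 k := by
    rw [Sym2.mem_iff] at ha
    rcases ha with rfl | rfl
    · rcases y with ⟨k, i⟩ | i
      · obtain rfl : i = 0 := Subsingleton.elim _ _
        exact ⟨k, Sym2.eq_swap⟩
      · obtain rfl : i = 0 := Subsingleton.elim _ _
        exact absurd (by simp : (s(Sum.inr 0, Sum.inr 0) : Sym2 (MbarPt 1)).IsDiag) harc₀.1
    · rcases x with ⟨k, i⟩ | i
      · obtain rfl : i = 0 := Subsingleton.elim _ _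
        exact ⟨k, rfl⟩
      · obtain rfl : i = 0 := Subsingleton.elim _ _
        exact absurd (by simp : (s(Sum.inr 0, Sum.inr 0) : Sym2 (MbarPt 1)).IsDiag) harc₀.1
  obtain ⟨k, hk⟩ := hkey
  rw [hk] at hp₀S
  clear hk harc₀ haeq ha hconn
  -- Step 2: minimality forces `S = {R1 k}`.
  have hall : ∀ ℓ ∈ (↑S : Set (Sym2 (MbarPt 1))), ℓ = R1 k := by
    intro ℓ hℓ
    by_contra hne
    refine hmin ℓ hℓ ⟨?_, ?_⟩
    all_goals
      have hTk : R1 k ∈ (↑S : Set (Sym2 (MbarPt 1))) \ {ℓ} := ⟨hp₀S, fun h => hne ((Set.mem_singleton_iff.mp h).symm)⟩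
      have hRmem : ∀ m : ℤ, R1 m ∈ RClos ((↑S : Set (Sym2 (MbarPt 1))) \ {ℓ}) := fun m =>
        ⟨R1 k, hTk, k - m, by rw [rotArc_R1]; congr 1; omega⟩
    · -- connectedness
      rintro p hp q hq
      obtain ⟨p₁, hp₁, mp, rfl⟩ := hp
      obtain ⟨q₁, hq₁, mq, rfl⟩ := hq
      have hip : IsArc (rotArc mp p₁) := isArc_rotArc (harc _ (Finset.mem_coe.mp hp₁.1))
      have hiq : IsArc (rotArc mq q₁) := isArc_rotArc (harc _ (Finset.mem_coe.mp hq₁.1))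
      obtain ⟨a, hpa1, hpa2⟩ := adj_R1 hip
      obtain ⟨b, hqb1, hqb2⟩ := adj_R1 hiq
      have hq' : rotArc mq q₁ ∈ RClos ((↑S : Set (Sym2 (MbarPt 1))) \ {ℓ}) := ⟨q₁, hq₁, mq, rfl⟩
      by_cases hab : a = b
      · refine ⟨2, ?_⟩
        simp only [AdjChain]
        exact ⟨R1 a, hRmem a, hpa1, _, hq', hab ▸ hqb2, rfl⟩
      · refine ⟨3, ?_⟩
        simp only [AdjChain]
        exact ⟨R1 a, hRmem a, hpa1, R1 b, hRmem b,
          Or.inr ⟨R1_ne hab, 0, mem_R1 a, mem_R1 b⟩, _, hq', hqb2, rfl⟩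
    · -- complete orbit
      rintro (⟨j, i⟩ | i)
      · obtain rfl : i = 0 := Subsingleton.elim _ _
        exact ⟨R1 j, hRmem j, by simp [R1]⟩
      · obtain rfl : i = 0 := Subsingleton.elim _ _
        exact ⟨R1 0, hRmem 0, mem_R1 0⟩
  have hSeq : (↑S : Set (Sym2 (MbarPt 1))) = {R1 k} :=
    Set.eq_singleton_iff_unique_mem.mpr ⟨hp₀S, hall⟩
  -- Step 3: the homological length of `{R1 k}` is exactly 1.
  have hchar : ∀ p ∈ RClos (↑S : Set (Sym2 (MbarPt 1))), ∃ m : ℤ, p = R1 m := by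
    rintro p ⟨p₁, hp₁, m, rfl⟩
    rw [hSeq, Set.mem_singleton_iff] at hp₁
    subst hp₁
    exact ⟨k - m, rotArc_R1 m k⟩
  constructor
  · intro p hp q hq
    obtain ⟨a, rfl⟩ := hchar p hp
    obtain ⟨b, rfl⟩ := hchar q hq
    by_cases hab : a = b
    · subst hab
      exact ⟨0, Nat.zero_le 1, by simp only [AdjChain]⟩
    · refine ⟨1, le_refl 1, ?_⟩
      simp only [AdjChain]
      exact ⟨R1 b, hq, Or.inr ⟨R1_ne hab, 0, mem_R1 a, mem_R1 b⟩, rfl⟩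
  · refine ⟨R1 k, ⟨R1 k, by rw [hSeq]; exact rfl, 0, (rotArc_zeroA _).symm⟩,
      R1 (k - 1), ⟨R1 k, by rw [hSeq]; exact rfl, 1, (rotArc_R1 1 k).symm⟩, ?_⟩
    intro m hm
    obtain rfl : m = 0 := by omega
    simp only [AdjChain]
    exact R1_ne (by omega)
end

section
/- The partitions P₁ = {{1,2,3}} and P₂ = {{2,4}} belong to eNNC₄, but their meet in NNC₄, namely P₁ ∧ P₂ = {B ∩ B' : B ∈ P₁, B' ∈ P₂, B ∩ B' ≠ ∅} = {{2}}, does not belong to eNNC₄. In particular, eNNC₄ is not closed under the meet operation of NNC₄, so eNNC₄ is not a sublattice of NNC₄. -/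
/-! Non-exhaustive non-crossing partitions. For `m ≥ 1` we write `[m] = {1, …, m}`,
realised as `Set.Icc 1 m ⊆ ℕ`. -/

/-- `P` is a non-exhaustive non-crossing partition of `[m]`: a collection of pairwise
disjoint nonempty subsets of `[m]` (blocks) such that whenever `i < k < j < l` with
`i, j` in a block `B` and `k, l` in a block `B'`, then `B = B'`. -/
def IsNNC (m : ℕ) (P : Set (Set ℕ)) : Prop :=
  (∀ B ∈ P, B.Nonempty ∧ B ⊆ Set.Icc 1 m) ∧
  (∀ B ∈ P, ∀ B' ∈ P, B ≠ B' → Disjoint B B') ∧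
  (∀ B ∈ P, ∀ B' ∈ P, ∀ i k j l : ℕ, i < k → k < j → j < l →
    i ∈ B → j ∈ B → k ∈ B' → l ∈ B' → B = B')

/-- `P` is an even-exclusive non-exhaustive non-crossing partition of `[m]`: an element
of `NNC_m` having no singleton block `{i}` with `i` even. -/
def IsENNC (m : ℕ) (P : Set (Set ℕ)) : Prop :=
  IsNNC m P ∧ ∀ i : ℕ, Even i → ({i} : Set ℕ) ∉ P

/-- `P` refines `Q`: every block of `P` is contained in some block of `Q`. -/
def Refines (P Q : Set (Set ℕ)) : Prop :=
  ∀ B ∈ P, ∃ B' ∈ Q, B ⊆ B'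

/-- Example 4.9 of the paper: the partitions `P₁ = {{1,2,3}}` and
`P₂ = {{2,4}}` belong to `eNNC₄`, but their meet in `NNC₄`, namely
`P₁ ∧ P₂ = {B ∩ B' : B ∈ P₁, B' ∈ P₂, B ∩ B' ≠ ∅} = {{2}}`, does not belong to `eNNC₄`.
In particular `eNNC₄` is not closed under the meet of `NNC₄`, so it is not a sublattice
of `NNC₄`. -/
theorem eNNC_not_closed_under_meet :
    IsENNC 4 ({{1, 2, 3}} : Set (Set ℕ)) ∧
    IsENNC 4 ({{2, 4}} : Set (Set ℕ)) ∧
    {C : Set ℕ | ∃ B ∈ ({{1, 2, 3}} : Set (Set ℕ)), ∃ B' ∈ ({{2, 4}} : Set (Set ℕ)),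
        C = B ∩ B' ∧ C ≠ ∅} = ({{2}} : Set (Set ℕ)) ∧
    ¬ IsENNC 4 ({{2}} : Set (Set ℕ)) := by
  refine ⟨⟨⟨?_, ?_, ?_⟩, ?_⟩, ⟨⟨?_, ?_, ?_⟩, ?_⟩, ?_, ?_⟩
  · rintro B rfl
    constructor
    · exact ⟨1, by simp⟩
    · intro x hx
      simp only [Set.mem_insert_iff, Set.mem_singleton_iff] at hx
      rcases hx with rfl | rfl | rfl <;> simp [Set.mem_Icc]
  · rintro B rfl B' rfl h; exact absurd rfl h
  · rintro B rfl B' rfl; intros; rfl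
  · intro i hi h
    simp only [Set.mem_singleton_iff] at h
    have h1 : (1 : ℕ) ∈ ({i} : Set ℕ) := h ▸ (by simp)
    have h2 : (2 : ℕ) ∈ ({i} : Set ℕ) := h ▸ (by simp)
    simp only [Set.mem_singleton_iff] at h1 h2
    omega
  · rintro B rfl
    constructor
    · exact ⟨2, by simp⟩
    · intro x hx
      simp only [Set.mem_insert_iff, Set.mem_singleton_iff] at hx
      rcases hx with rfl | rfl <;> simp [Set.mem_Icc]
  · rintro B rfl B' rfl h; exact absurd rfl h
  · rintro B rfl B' rfl; intros; rfl
  · intro i hi h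
    simp only [Set.mem_singleton_iff] at h
    have h1 : (2 : ℕ) ∈ ({i} : Set ℕ) := h ▸ (by simp)
    have h2 : (4 : ℕ) ∈ ({i} : Set ℕ) := h ▸ (by simp)
    simp only [Set.mem_singleton_iff] at h1 h2
    omega
  · ext C
    simp only [Set.mem_setOf_eq, Set.mem_singleton_iff]
    constructor
    · rintro ⟨B, rfl, B', rfl, rfl, -⟩
      ext x
      simp only [Set.mem_inter_iff, Set.mem_insert_iff, Set.mem_singleton_iff]
      omega
    · rintro rfl
      refine ⟨_, rfl, _, rfl, ?_, ?_⟩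
      · ext x
        simp only [Set.mem_inter_iff, Set.mem_insert_iff, Set.mem_singleton_iff]
        omega
      · intro h
        have : (2 : ℕ) ∈ (∅ : Set ℕ) := h ▸ rfl
        exact this
  · rintro ⟨-, h⟩
    exact h 2 (by norm_num) rfl
end
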